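/- Let τ be an infinite cardinal, let X = Z ⊕ (⊕{X_α : α ∈ A}) be the topological sum, where each X_α is a nonempty compact Hausdorff space, |A| = τ, and Z is a compact Hausdorff space, and let S ⊆ Z with |S| ≤ τ. Then the subspace X \ S is subcompact, i.e., admits a condensation onto a compact Hausdorff space. -/

import Mathlib

open Cardinal Topology

universe u

/-- A Hausdorff space is *subcompact* if it admits a condensation (continuous bijection)
onto a compact Hausdorff space. -/
def Subcompact (X : Type u) [TopologicalSpace X] : Prop :=
  ∃ (Y : Type u) (_ : TopologicalSpace Y), CompactSpace Y ∧ T2Space Y ∧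
    ∃ f : X → Y, Continuous f ∧ Function.Bijective f

/-- A compact Hausdorff space `X` is an `a_τ`-space if for every `C ⊆ X` with `#C ≤ τ`
there is a condensation from the subspace `X \ C` onto a compact Hausdorff space. -/
def ATauSpace (τ : Cardinal.{u}) (X : Type u) [TopologicalSpace X] : Prop :=
  CompactSpace X ∧ T2Space X ∧ ∀ C : Set X, #C ≤ τ → Subcompact ↥(Cᶜ)

/-- A compact Hausdorff space `X` is a strictly `a_τ`-space if for every `C ⊆ X` with
`#C ≤ τ` there is a condensation from `X \ C` onto a compact Hausdorff space `K`
extending to a continuous map `X → K` (encoded: a continuous `g : X → K` whose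
restriction to `X \ C` is bijective). -/
def StrictATauSpace (τ : Cardinal.{u}) (X : Type u) [TopologicalSpace X] : Prop :=
  CompactSpace X ∧ T2Space X ∧ ∀ C : Set X, #C ≤ τ →
    ∃ (K : Type u) (_ : TopologicalSpace K), CompactSpace K ∧ T2Space K ∧
      ∃ g : X → K, Continuous g ∧ Function.Bijective fun x : ↥(Cᶜ) => g x

/-- A Hausdorff space `X` is `a_τ`-subcompact if for every `C ⊆ X` with `#C ≤ τ` there
is a condensation from `X \ C` onto an `a_τ`-space. -/
def ATauSubcompact (τ : Cardinal.{u}) (X : Type u) [TopologicalSpace X] : Prop :=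
  ∀ C : Set X, #C ≤ τ →
    ∃ (Y : Type u) (_ : TopologicalSpace Y), ATauSpace τ Y ∧
      ∃ f : ↥(Cᶜ) → Y, Continuous f ∧ Function.Bijective f

/-- A Hausdorff space `X` is strictly `a_τ`-subcompact if for every `C ⊆ X` with `#C ≤ τ`
there is a condensation from `X \ C` onto a strictly `a_τ`-space `Y` extending to a
continuous map `X → Y`. -/
def StrictATauSubcompact (τ : Cardinal.{u}) (X : Type u) [TopologicalSpace X] : Prop :=
  ∀ C : Set X, #C ≤ τ →
    ∃ (Y : Type u) (_ : TopologicalSpace Y), StrictATauSpace τ Y ∧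
      ∃ g : X → Y, Continuous g ∧ Function.Bijective fun x : ↥(Cᶜ) => g x

/-- A Hausdorff space `X` is almost strictly `a_τ`-subcompact if for every `C ⊆ X` with
`#C ≤ τ` there is a condensation from `X \ C` onto a compact Hausdorff space `Y`
extending to a continuous map `X → Y`. -/
def AlmostStrictATauSubcompact (τ : Cardinal.{u}) (X : Type u) [TopologicalSpace X] : Prop :=
  ∀ C : Set X, #C ≤ τ →
    ∃ (Y : Type u) (_ : TopologicalSpace Y), CompactSpace Y ∧ T2Space Y ∧
      ∃ g : X → Y, Continuous g ∧ Function.Bijective fun x : ↥(Cᶜ) => g x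


namespace Stmt6Aux

open Set

variable {A : Type u} {Z : Type u} {Xa : A → Type u} {S : Set Z}

/-! ### Set-level gluing machinery (no topology) -/

/-- the glue point attached to `s ∈ S`. -/
def glue (ι : ↥S ↪ A) (p : ∀ a, Xa a) (s : ↥S) : Z ⊕ (Σ a, Xa a) :=
  Sum.inr ⟨ι s, p (ι s)⟩

theorem glue_inj (ι : ↥S ↪ A) (p : ∀ a, Xa a) {s s' : ↥S}
    (h : glue ι p s = glue ι p s') : s = s' := by
  simp only [glue, Sum.inr.injEq, Sigma.mk.inj_iff] at h
  exact ι.injective h.1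

/-- the gluing equivalence relation. -/
def gsetoid (ι : ↥S ↪ A) (p : ∀ a, Xa a) : Setoid (Z ⊕ (Σ a, Xa a)) where
  r x y := x = y ∨ ∃ s : ↥S,
    (x = Sum.inl ↑s ∧ y = glue ι p s) ∨ (y = Sum.inl ↑s ∧ x = glue ι p s)
  iseqv := by
    constructor
    · exact fun x => Or.inl rfl
    · rintro x y (rfl | ⟨s, h | h⟩)
      · exact Or.inl rfl
      · exact Or.inr ⟨s, Or.inr h⟩
      · exact Or.inr ⟨s, Or.inl h⟩
    · rintro x y z (rfl | ⟨s, ⟨hx, hy⟩ | ⟨hy, hx⟩⟩) h2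
      · exact h2
      · rcases h2 with rfl | ⟨s', ⟨hy', hz⟩ | ⟨hz, hy'⟩⟩
        · exact Or.inr ⟨s, Or.inl ⟨hx, hy⟩⟩
        · exact (Sum.inr_ne_inl (hy.symm.trans hy')).elim
        · obtain rfl : s = s' := glue_inj ι p (hy.symm.trans hy')
          exact Or.inl (hx.trans hz.symm)
      · rcases h2 with rfl | ⟨s', ⟨hy', hz⟩ | ⟨hz, hy'⟩⟩
        · exact Or.inr ⟨s, Or.inr ⟨hy, hx⟩⟩
        · obtain rfl : s = s' := Subtype.ext (Sum.inl.inj (hy.symm.trans hy'))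
          exact Or.inl (hx.trans hz.symm)
        · exact (Sum.inl_ne_inr (hy.symm.trans hy')).elim

variable (ι : ↥S ↪ A) (p : ∀ a, Xa a)

/-- Saturated set. -/
def Sat (O : Set (Z ⊕ (Σ a, Xa a))) : Prop :=
  ∀ x y, (gsetoid ι p).r x y → x ∈ O → y ∈ O

variable (σ : A → Z)

/-- saturated set around a `Z`-set: all of `V` together with all blobs attached in `V`. -/
def satZ (V : Set Z) : Set (Z ⊕ (Σ a, Xa a)) :=
  {x | Sum.elim (fun z => z ∈ V) (fun q => σ q.1 ∈ V) x}

/-- a single summand blob. -/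
def blob (a : A) : Set (Z ⊕ (Σ a, Xa a)) :=
  {x | Sum.elim (fun _ => False) (fun q => q.1 = a) x}

/-- set inside a single blob. -/
def satA (a : A) (U : Set (Xa a)) : Set (Z ⊕ (Σ a, Xa a)) :=
  {x | Sum.elim (fun _ => False) (fun q => ∃ u ∈ U, q = ⟨a, u⟩) x}

/-- non-glue points. -/
def NG : Set (Z ⊕ (Σ a, Xa a)) := (Set.range (glue ι p))ᶜ

@[simp] theorem mem_satZ_inl {V : Set Z} {z : Z} :
    Sum.inl z ∈ satZ (Xa := Xa) σ V ↔ z ∈ V := Iff.rfl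

@[simp] theorem mem_satZ_inr {V : Set Z} {q : Σ a, Xa a} :
    Sum.inr q ∈ satZ (Xa := Xa) σ V ↔ σ q.1 ∈ V := Iff.rfl

@[simp] theorem mem_blob_inl {a : A} {z : Z} :
    Sum.inl z ∈ blob (Z := Z) (Xa := Xa) a ↔ False := Iff.rfl

@[simp] theorem mem_blob_inr {a : A} {q : Σ a, Xa a} :
    Sum.inr q ∈ blob (Z := Z) (Xa := Xa) a ↔ q.1 = a := Iff.rfl

@[simp] theorem mem_satA_inl {a : A} {U : Set (Xa a)} {z : Z} :
    Sum.inl z ∈ satA (Z := Z) a U ↔ False := Iff.rfl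

@[simp] theorem mem_satA_inr {a : A} {U : Set (Xa a)} {q : Σ a, Xa a} :
    Sum.inr q ∈ satA (Z := Z) a U ↔ ∃ u ∈ U, q = ⟨a, u⟩ := Iff.rfl

@[simp] theorem mem_satA_inr_mk {a : A} {U : Set (Xa a)} {x : Xa a} :
    Sum.inr ⟨a, x⟩ ∈ satA (Z := Z) a U ↔ x ∈ U := by
  rw [mem_satA_inr]
  constructor
  · rintro ⟨u, hu, h⟩
    obtain rfl := sigma_mk_injective h
    exact hu
  · exact fun hx => ⟨x, hx, rfl⟩

/-! ### Saturation lemmas -/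

theorem sat_of_ng {O : Set (Z ⊕ (Σ a, Xa a))} (h1 : ∀ z : Z, Sum.inl z ∉ O)
    (h2 : O ⊆ NG ι p) : Sat ι p O := by
  rintro x y (rfl | ⟨s, ⟨hx, hy⟩ | ⟨hy, hx⟩⟩) hm
  · exact hm
  · rw [hx] at hm; exact absurd hm (h1 _)
  · rw [hx] at hm; exact absurd ⟨s, rfl⟩ (h2 hm)

theorem sat_satZ (hσ : ∀ s : ↥S, σ (ι s) = ↑s) {V : Set Z} :
    Sat ι p (satZ (Xa := Xa) σ V) := by
  rintro x y (rfl | ⟨s, ⟨hx, hy⟩ | ⟨hy, hx⟩⟩) hm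
  · exact hm
  · rw [hx] at hm; rw [hy]
    show σ (ι s) ∈ V
    rw [hσ s]; exact hm
  · rw [hx] at hm; rw [hy]
    show (↑s : Z) ∈ V
    rw [← hσ s]; exact hm

theorem sat_blob_compl (a : A) (hga : ¬∃ s : ↥S, ι s = a) :
    Sat ι p (blob (Z := Z) (Xa := Xa) a)ᶜ := by
  rintro x y (rfl | ⟨s, ⟨hx, hy⟩ | ⟨hy, hx⟩⟩) hm
  · exact hm
  · rw [hy]; exact fun hb => hga ⟨s, hb⟩
  · rw [hy]; exact fun h => h

theorem sat_blob (a : A) (hga : ¬∃ s : ↥S, ι s = a) :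
    Sat ι p (blob (Z := Z) (Xa := Xa) a) := by
  rintro x y (rfl | ⟨s, ⟨hx, hy⟩ | ⟨hy, hx⟩⟩) hm
  · exact hm
  · rw [hx] at hm; exact absurd hm (fun h => h)
  · rw [hx] at hm; exact absurd ⟨s, hm⟩ hga

theorem sat_satA {a : A} {U : Set (Xa a)} (hpa : p a ∉ U) :
    Sat ι p (satA (Z := Z) a U) := by
  refine sat_of_ng ι p (fun z h => h) ?_
  rintro (z | q) hq
  · exact absurd hq (fun h => h)
  · obtain ⟨u, hu, rfl⟩ := hq
    rintro ⟨s, hs⟩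
    rw [glue, Sum.inr.injEq] at hs
    obtain ⟨h1, h2⟩ := Sigma.mk.inj_iff.mp hs
    subst h1
    obtain rfl : u = p (ι s) := by
      first | exact eq_of_heq h2.symm | exact eq_of_heq h2
    exact hpa hu

theorem sat_mixed (a : A) (U' : Set (Xa a)) (hpa : p a ∈ U') :
    Sat ι p ((satZ σ Set.univ ∩ (blob (Z := Z) (Xa := Xa) a)ᶜ) ∪ satA a U') := by
  rintro x y (rfl | ⟨s, ⟨hx, hy⟩ | ⟨hy, hx⟩⟩) hm
  · exact hm
  · rw [hy]
    by_cases hιa : ι s = a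
    · subst hιa
      exact Or.inr ⟨p (ι s), hpa, rfl⟩
    · exact Or.inl ⟨trivial, hιa⟩
  · rw [hy]
    exact Or.inl ⟨trivial, fun h => h⟩

/-! ### Plain sum topology openness -/

section SumTop
variable [TopologicalSpace Z] [∀ a, TopologicalSpace (Xa a)]

theorem isOpen_satZ {V : Set Z} (hV : IsOpen V) : IsOpen (satZ (Xa := Xa) σ V) := by
  rw [isOpen_sum_iff]
  constructor
  · exact hV
  · rw [isOpen_sigma_iff]
    intro a
    by_cases h : σ a ∈ V
    · have he : Sigma.mk a ⁻¹' (Sum.inr ⁻¹' satZ (Xa := Xa) σ V) = Set.univ := by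
        ext x; simpa using h
      rw [he]; exact isOpen_univ
    · have he : Sigma.mk a ⁻¹' (Sum.inr ⁻¹' satZ (Xa := Xa) σ V) = ∅ := by
        ext x; simpa using h
      rw [he]; exact isOpen_empty

theorem isOpen_blob (a : A) : IsOpen (blob (Z := Z) (Xa := Xa) a) := by
  rw [isOpen_sum_iff]
  refine ⟨isOpen_empty, ?_⟩
  rw [isOpen_sigma_iff]
  intro b
  by_cases h : b = a
  · have he : Sigma.mk b ⁻¹' (Sum.inr ⁻¹' blob (Z := Z) (Xa := Xa) a) = Set.univ := by
      ext x; simpa using h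
    rw [he]; exact isOpen_univ
  · have he : Sigma.mk b ⁻¹' (Sum.inr ⁻¹' blob (Z := Z) (Xa := Xa) a) = ∅ := by
      ext x; simpa using h
    rw [he]; exact isOpen_empty

theorem isOpen_blob_compl (a : A) : IsOpen (blob (Z := Z) (Xa := Xa) a)ᶜ := by
  rw [isOpen_compl_iff, isClosed_sum_iff]
  refine ⟨isClosed_empty, ?_⟩
  rw [isClosed_sigma_iff]
  intro b
  by_cases h : b = a
  · have he : Sigma.mk b ⁻¹' (Sum.inr ⁻¹' blob (Z := Z) (Xa := Xa) a) = Set.univ := by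
      ext x; simpa using h
    rw [he]; exact isClosed_univ
  · have he : Sigma.mk b ⁻¹' (Sum.inr ⁻¹' blob (Z := Z) (Xa := Xa) a) = ∅ := by
      ext x; simpa using h
    rw [he]; exact isClosed_empty

theorem isOpen_satA {a : A} {U : Set (Xa a)} (hU : IsOpen U) :
    IsOpen (satA (Z := Z) (Xa := Xa) a U) := by
  rw [isOpen_sum_iff]
  refine ⟨isOpen_empty, ?_⟩
  rw [isOpen_sigma_iff]
  intro b
  by_cases h : b = a
  · subst h
    have he : Sigma.mk b ⁻¹' (Sum.inr ⁻¹' satA (Z := Z) b U) = U := by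
      ext x
      exact mem_satA_inr_mk (Z := Z)
    rw [he]; exact hU
  · have he : Sigma.mk b ⁻¹' (Sum.inr ⁻¹' satA (Z := Z) a U) = ∅ := by
      ext x
      simp only [mem_preimage, mem_satA_inr, mem_empty_iff_false, iff_false]
      rintro ⟨u, hu, heq⟩
      exact h (congrArg Sigma.fst heq)
    rw [he]; exact isOpen_empty

theorem isOpen_NG [∀ a, T2Space (Xa a)] : IsOpen (NG (Z := Z) ι p) := by
  rw [NG, isOpen_compl_iff, isClosed_sum_iff]
  constructor
  · have h : Sum.inl ⁻¹' Set.range (glue (Z := Z) ι p) = ∅ := by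
      ext z
      simp only [mem_preimage, mem_range, mem_empty_iff_false, iff_false]
      rintro ⟨s, h⟩
      exact Sum.inr_ne_inl h
    rw [h]; exact isClosed_empty
  · rw [isClosed_sigma_iff]
    intro b
    by_cases h : ∃ s : ↥S, ι s = b
    · obtain ⟨s0, hs0⟩ := h
      have he : Sigma.mk b ⁻¹' (Sum.inr ⁻¹' Set.range (glue (Z := Z) ι p)) = {p b} := by
        ext x
        simp only [mem_preimage, mem_range, glue, mem_singleton_iff]
        constructor
        · rintro ⟨s, hs⟩
          rw [Sum.inr.injEq] at hs
          obtain ⟨h1, h2⟩ := Sigma.mk.inj_iff.mp hs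
          subst h1
          first | exact eq_of_heq h2 | exact (eq_of_heq h2).symm
        · rintro rfl
          refine ⟨s0, ?_⟩
          rw [Sum.inr.injEq]
          subst hs0
          rfl
      rw [he]; exact isClosed_singleton
    · have he : Sigma.mk b ⁻¹' (Sum.inr ⁻¹' Set.range (glue (Z := Z) ι p)) = ∅ := by
        ext x
        simp only [mem_preimage, mem_range, mem_empty_iff_false, iff_false]
        rintro ⟨s, hs⟩
        rw [glue, Sum.inr.injEq] at hs
        exact h ⟨s, (Sigma.mk.inj_iff.mp hs).1⟩
      rw [he]; exact isClosed_empty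

/-! ### The modified topology `t0` -/

/-- condition making blobs converge to their attach points. -/
def blobCond (U : Set (Z ⊕ (Σ a, Xa a))) : Prop :=
  ∀ z : Z, Sum.inl z ∈ U → ∃ V : Set Z, IsOpen V ∧ z ∈ V ∧
    (∀ z' ∈ V, Sum.inl z' ∈ U) ∧
    ∃ E : Finset A, ∀ b : A, b ∉ E → σ b ∈ V → ∀ x : Xa b, Sum.inr ⟨b, x⟩ ∈ U

/-- the coarser topology in which blobs converge to their attach points. -/
def t0 : TopologicalSpace (Z ⊕ (Σ a, Xa a)) where
  IsOpen U := IsOpen U ∧ blobCond σ U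
  isOpen_univ := ⟨isOpen_univ, fun z _ =>
    ⟨Set.univ, isOpen_univ, trivial, fun _ _ => trivial, ∅, fun _ _ _ _ => trivial⟩⟩
  isOpen_inter := by
    rintro U1 U2 ⟨h1, c1⟩ ⟨h2, c2⟩
    refine ⟨h1.inter h2, fun z hz => ?_⟩
    obtain ⟨V1, hV1, hz1, hs1, E1, hE1⟩ := c1 z hz.1
    obtain ⟨V2, hV2, hz2, hs2, E2, hE2⟩ := c2 z hz.2
    classical
    refine ⟨V1 ∩ V2, hV1.inter hV2, ⟨hz1, hz2⟩,
      fun z' hz' => ⟨hs1 z' hz'.1, hs2 z' hz'.2⟩, E1 ∪ E2, fun b hb hσb x => ?_⟩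
    rw [Finset.mem_union] at hb
    push_neg at hb
    exact ⟨hE1 b hb.1 hσb.1 x, hE2 b hb.2 hσb.2 x⟩
  isOpen_sUnion := by
    intro 𝒮 h
    refine ⟨isOpen_sUnion (fun U hU => (h U hU).1), fun z hz => ?_⟩
    obtain ⟨U, hU𝒮, hzU⟩ := hz
    obtain ⟨V, hV, hzV, hsub, E, hE⟩ := (h U hU𝒮).2 z hzU
    exact ⟨V, hV, hzV, fun z' hz' => ⟨U, hU𝒮, hsub z' hz'⟩, E,
      fun b hb hσb x => ⟨U, hU𝒮, hE b hb hσb x⟩⟩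

theorem t0_le : instTopologicalSpaceSum ≤ t0 (Z := Z) (Xa := Xa) σ := by
  rw [TopologicalSpace.le_def]
  exact fun U hU => hU.1

theorem t0_isOpen_of_no_inl {U : Set (Z ⊕ (Σ a, Xa a))} (hU : IsOpen U)
    (h : ∀ z : Z, Sum.inl z ∉ U) : IsOpen[t0 σ] U :=
  ⟨hU, fun z hz => absurd hz (h z)⟩

theorem t0_isOpen_satZ {V : Set Z} (hV : IsOpen V) :
    IsOpen[t0 σ] (satZ (Xa := Xa) σ V) :=
  ⟨isOpen_satZ σ hV, fun z hz =>
    ⟨V, hV, hz, fun _ h => h, ∅, fun _ _ hb _ => hb⟩⟩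

theorem t0_isOpen_blob_compl (a : A) :
    IsOpen[t0 σ] (blob (Z := Z) (Xa := Xa) a)ᶜ := by
  classical
  refine ⟨isOpen_blob_compl a, fun z _ => ?_⟩
  exact ⟨Set.univ, isOpen_univ, trivial, fun _ _ h => h, {a},
    fun b hb _ x hbl => hb (Finset.mem_singleton.mpr hbl)⟩

theorem t0_isOpen_mixed (a : A) {U' : Set (Xa a)} (hU' : IsOpen U') :
    IsOpen[t0 σ] ((satZ σ Set.univ ∩ (blob (Z := Z) (Xa := Xa) a)ᶜ) ∪ satA a U') := by
  classical
  refine ⟨((isOpen_satZ σ isOpen_univ).inter (isOpen_blob_compl a)).union (isOpen_satA hU'),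
    fun z _ => ?_⟩
  refine ⟨Set.univ, isOpen_univ, trivial, fun z' _ => Or.inl ⟨trivial, fun h => h⟩, {a},
    fun b hb _ x => Or.inl ⟨trivial, fun hbl => hb (Finset.mem_singleton.mpr hbl)⟩⟩

/-! ### Separation by saturated `t0`-open sets -/

variable [T2Space Z] [∀ a, T2Space (Xa a)]

theorem sep_inl_inr (hσ : ∀ s : ↥S, σ (ι s) = ↑s) (z : Z) (a : A) (w : Xa a)
    (hy : Sum.inr ⟨a, w⟩ ∈ NG (Z := Z) ι p) :
    ∃ O1 O2 : Set (Z ⊕ (Σ a, Xa a)), IsOpen[t0 σ] O1 ∧ IsOpen[t0 σ] O2 ∧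
      Sat ι p O1 ∧ Sat ι p O2 ∧
      Sum.inl z ∈ O1 ∧ Sum.inr ⟨a, w⟩ ∈ O2 ∧ O1 ∩ O2 = ∅ := by
  by_cases hga : ∃ s : ↥S, ι s = a
  · obtain ⟨s0, hs0⟩ := hga
    have hw : w ≠ p a := by
      rintro rfl
      exact hy ⟨s0, by rw [glue, Sum.inr.injEq]; subst hs0; rfl⟩
    obtain ⟨U, U', hU, hU', hwU, hpU', hdUU⟩ := t2_separation hw
    refine ⟨(satZ σ Set.univ ∩ (blob (Z := Z) (Xa := Xa) a)ᶜ) ∪ satA a U', satA a U,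
      t0_isOpen_mixed σ a hU',
      t0_isOpen_of_no_inl σ (isOpen_satA hU) (fun z h => h),
      sat_mixed ι p σ a U' hpU',
      sat_satA ι p (fun hpa => (Set.disjoint_left.mp hdUU hpa) hpU'),
      Or.inl ⟨trivial, fun h => h⟩, mem_satA_inr_mk.mpr hwU, ?_⟩
    rw [Set.eq_empty_iff_forall_notMem]
    rintro (z' | q) hmem
    · exact hmem.2
    · obtain ⟨h1 | h1, h2⟩ := hmem
      · obtain ⟨u, hu, rfl⟩ := h2
        exact h1.2 rfl
      · obtain ⟨u, hu, rfl⟩ := h2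
        exact Set.disjoint_left.mp hdUU hu (mem_satA_inr_mk.mp h1)
  · refine ⟨(blob (Z := Z) (Xa := Xa) a)ᶜ, blob a,
      t0_isOpen_blob_compl σ a,
      t0_isOpen_of_no_inl σ (isOpen_blob a) (fun z h => h),
      sat_blob_compl ι p a hga, sat_blob ι p a hga, fun h => h, rfl, ?_⟩
    rw [Set.eq_empty_iff_forall_notMem]
    rintro x ⟨h1, h2⟩
    exact h1 h2

theorem sep (hσ : ∀ s : ↥S, σ (ι s) = ↑s) {x y : Z ⊕ (Σ a, Xa a)}
    (hx : x ∈ NG ι p) (hy : y ∈ NG ι p) (hxy : x ≠ y) :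
    ∃ O1 O2 : Set (Z ⊕ (Σ a, Xa a)), IsOpen[t0 σ] O1 ∧ IsOpen[t0 σ] O2 ∧
      Sat ι p O1 ∧ Sat ι p O2 ∧ x ∈ O1 ∧ y ∈ O2 ∧ O1 ∩ O2 = ∅ := by
  rcases x with z1 | ⟨a, w⟩
  · rcases y with z2 | ⟨b, u⟩
    · have hz : z1 ≠ z2 := fun h => hxy (by rw [h])
      obtain ⟨V1, V2, hV1, hV2, hz1, hz2, hd⟩ := t2_separation hz
      refine ⟨satZ σ V1, satZ σ V2, t0_isOpen_satZ σ hV1, t0_isOpen_satZ σ hV2,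
        sat_satZ ι p σ hσ, sat_satZ ι p σ hσ, hz1, hz2, ?_⟩
      rw [Set.eq_empty_iff_forall_notMem]
      rintro (z | q) ⟨h1, h2⟩
      · exact Set.disjoint_left.mp hd h1 h2
      · exact Set.disjoint_left.mp hd h1 h2
    · exact sep_inl_inr ι p σ hσ z1 b u hy
  · rcases y with z2 | ⟨b, u⟩
    · obtain ⟨O1, O2, h1, h2, h3, h4, h5, h6, h7⟩ := sep_inl_inr ι p σ hσ z2 a w hx
      exact ⟨O2, O1, h2, h1, h4, h3, h6, h5, by rw [Set.inter_comm]; exact h7⟩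
    · by_cases hab : a = b
      · subst hab
        have hwu : w ≠ u := by
          rintro rfl
          exact hxy rfl
        obtain ⟨U, U', hU, hU', hwU, huU', hd⟩ := t2_separation hwu
        refine ⟨satA a U ∩ NG ι p, satA a U' ∩ NG ι p,
          t0_isOpen_of_no_inl σ ((isOpen_satA hU).inter (isOpen_NG ι p)) (fun z h => h.1),
          t0_isOpen_of_no_inl σ ((isOpen_satA hU').inter (isOpen_NG ι p)) (fun z h => h.1),
          sat_of_ng ι p (fun z h => h.1) (fun _ h => h.2),
          sat_of_ng ι p (fun z h => h.1) (fun _ h => h.2),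
          ⟨mem_satA_inr_mk.mpr hwU, hx⟩, ⟨mem_satA_inr_mk.mpr huU', hy⟩, ?_⟩
        rw [Set.eq_empty_iff_forall_notMem]
        rintro (z | q) ⟨⟨h1, -⟩, ⟨h2, -⟩⟩
        · exact h1
        · obtain ⟨v, hv, rfl⟩ := h1
          exact Set.disjoint_left.mp hd hv (mem_satA_inr_mk.mp h2)
      · refine ⟨blob (Z := Z) (Xa := Xa) a ∩ NG ι p, blob b ∩ NG ι p,
          t0_isOpen_of_no_inl σ ((isOpen_blob a).inter (isOpen_NG ι p)) (fun z h => h.1),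
          t0_isOpen_of_no_inl σ ((isOpen_blob b).inter (isOpen_NG ι p)) (fun z h => h.1),
          sat_of_ng ι p (fun z h => h.1) (fun _ h => h.2),
          sat_of_ng ι p (fun z h => h.1) (fun _ h => h.2),
          ⟨rfl, hx⟩, ⟨rfl, hy⟩, ?_⟩
        rw [Set.eq_empty_iff_forall_notMem]
        rintro (z | q) ⟨⟨h1, -⟩, ⟨h2, -⟩⟩
        · exact h1
        · exact hab (h1.symm.trans h2)

end SumTop

/-! ### Canonical representatives -/

open scoped Classical in
/-- canonical representative. -/
noncomputable def rep (x : Z ⊕ (Σ a, Xa a)) : Z ⊕ (Σ a, Xa a) :=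
  if h : ∃ s : ↥S, x = glue ι p s then Sum.inl ↑h.choose else x

theorem rep_rel (x : Z ⊕ (Σ a, Xa a)) : (gsetoid ι p).r (rep ι p x) x := by
  by_cases h : ∃ s : ↥S, x = glue ι p s
  · have he : rep ι p x = Sum.inl ↑h.choose := dif_pos h
    rw [he]
    exact Or.inr ⟨h.choose, Or.inl ⟨rfl, h.choose_spec⟩⟩
  · have he : rep ι p x = x := dif_neg h
    rw [he]

theorem rep_ng (x : Z ⊕ (Σ a, Xa a)) : rep ι p x ∈ NG ι p := by
  by_cases h : ∃ s : ↥S, x = glue ι p s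
  · have he : rep ι p x = Sum.inl ↑h.choose := dif_pos h
    rw [he]
    rintro ⟨s, hs⟩
    exact Sum.inr_ne_inl hs
  · have he : rep ι p x = x := dif_neg h
    rw [he]
    rintro ⟨s, hs⟩
    exact h ⟨s, hs.symm⟩

/-! ### The quotient -/

section Quot
variable [TopologicalSpace Z] [∀ a, TopologicalSpace (Xa a)]

/-- quotient topology on the glued space over the modified topology `t0`. -/
def tQ : TopologicalSpace (Quotient (gsetoid ι p)) :=
  (t0 (Z := Z) (Xa := Xa) σ).coinduced (Quotient.mk (gsetoid ι p))

theorem continuous_mkQ : Continuous[t0 σ, tQ ι p σ] (Quotient.mk (gsetoid ι p)) :=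
  continuous_coinduced_rng

theorem key_preimage {O : Set (Z ⊕ (Σ a, Xa a))} (hsat : Sat ι p O) :
    Quotient.mk (gsetoid ι p) ⁻¹' (Quotient.mk (gsetoid ι p) '' O) = O := by
  ext w
  constructor
  · rintro ⟨v, hv, he⟩
    exact hsat v w (Quotient.exact he) hv
  · exact fun h => ⟨w, h, rfl⟩

theorem t2_tQ [T2Space Z] [∀ a, T2Space (Xa a)] (hσ : ∀ s : ↥S, σ (ι s) = ↑s) :
    @T2Space (Quotient (gsetoid ι p)) (tQ ι p σ) := by
  refine @T2Space.mk _ (tQ ι p σ) ?_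
  intro c1 c2 hne
  obtain ⟨x, rfl⟩ := Quotient.exists_rep c1
  obtain ⟨y, rfl⟩ := Quotient.exists_rep c2
  have hr : ¬ (gsetoid ι p).r x y := fun h => hne (Quotient.sound h)
  have hrep : rep ι p x ≠ rep ι p y := by
    intro h
    exact hr ((gsetoid ι p).trans ((gsetoid ι p).symm (rep_rel ι p x))
      (h ▸ rep_rel ι p y))
  obtain ⟨O1, O2, hO1, hO2, hs1, hs2, hm1, hm2, hdisj⟩ :=
    sep ι p σ hσ (rep_ng ι p x) (rep_ng ι p y) hrep
  have hx1 : x ∈ O1 := hs1 _ _ (rep_rel ι p x) hm1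
  have hy2 : y ∈ O2 := hs2 _ _ (rep_rel ι p y) hm2
  refine ⟨Quotient.mk _ '' O1, Quotient.mk _ '' O2, ?_, ?_,
    ⟨x, hx1, rfl⟩, ⟨y, hy2, rfl⟩, ?_⟩
  · rw [tQ, isOpen_coinduced, key_preimage ι p hs1]
    exact hO1
  · rw [tQ, isOpen_coinduced, key_preimage ι p hs2]
    exact hO2
  · rw [Set.disjoint_left]
    rintro c ⟨w1, h1, rfl⟩ ⟨w2, h2, he⟩
    have hw : w1 ∈ O2 := hs2 w2 w1 (Quotient.exact he) h2
    exact Set.eq_empty_iff_forall_notMem.mp hdisj w1 ⟨h1, hw⟩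

/-! ### Compactness of `t0` -/

theorem t0_compact [CompactSpace Z] [∀ a, CompactSpace (Xa a)] :
    @CompactSpace (Z ⊕ (Σ a, Xa a)) (t0 σ) := by
  classical
  refine @CompactSpace.mk _ (t0 σ) ?_
  refine @isCompact_of_finite_subcover _ (t0 σ) Set.univ ?_
  intro I U hU hcov
  -- choose a cover element for every point of `Z`
  have hch : ∀ z : Z, ∃ i : I, Sum.inl z ∈ U i := by
    intro z
    simpa using Set.mem_iUnion.mp (hcov (Set.mem_univ (Sum.inl z)))
  choose iz hiz using hch
  have hbc : ∀ z : Z, ∃ V : Set Z, IsOpen V ∧ z ∈ V ∧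
      (∀ z' ∈ V, Sum.inl z' ∈ U (iz z)) ∧
      ∃ E : Finset A, ∀ b : A, b ∉ E → σ b ∈ V → ∀ x : Xa b, Sum.inr ⟨b, x⟩ ∈ U (iz z) :=
    fun z => (hU (iz z)).2 z (hiz z)
  choose V hVopen hVz hVsub E hE using hbc
  obtain ⟨t, ht⟩ := isCompact_univ.elim_finite_subcover V hVopen
    (fun z _ => Set.mem_iUnion.mpr ⟨z, hVz z⟩)
  -- blobs in the exceptional sets, each compact, each finitely covered
  have hblob : ∀ b : A, @IsCompact _ (t0 (Z := Z) (Xa := Xa) σ)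
      (Set.range (fun x : Xa b => (Sum.inr ⟨b, x⟩ : Z ⊕ (Σ a, Xa a)))) := by
    intro b
    have h1 : IsCompact (Set.range (fun x : Xa b => (Sum.inr ⟨b, x⟩ : Z ⊕ (Σ a, Xa a)))) :=
      isCompact_range (continuous_inr.comp continuous_sigmaMk)
    have h2 : Continuous[instTopologicalSpaceSum, t0 (Z := Z) (Xa := Xa) σ]
        (id : (Z ⊕ (Σ a, Xa a)) → (Z ⊕ (Σ a, Xa a))) := continuous_id_of_le (t0_le σ)
    have := @IsCompact.image _ _ instTopologicalSpaceSum (t0 σ) _ id h1 h2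
    rwa [Set.image_id] at this
  have hcov' : ∀ b : A,
      Set.range (fun x : Xa b => (Sum.inr ⟨b, x⟩ : Z ⊕ (Σ a, Xa a))) ⊆ ⋃ i, U i :=
    fun b => (Set.subset_univ _).trans hcov
  have hfin : ∀ b : A, ∃ tb : Finset I,
      Set.range (fun x : Xa b => (Sum.inr ⟨b, x⟩ : Z ⊕ (Σ a, Xa a))) ⊆ ⋃ i ∈ tb, U i :=
    fun b => @IsCompact.elim_finite_subcover _ (t0 σ) _ _ (hblob b) U hU (hcov' b)
  choose tb htb using hfin
  refine ⟨t.image iz ∪ (t.biUnion E).biUnion tb, ?_⟩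
  rintro (z | ⟨b, x⟩) -
  · obtain ⟨z', hz't, hzV⟩ := Set.mem_iUnion₂.mp (ht (Set.mem_univ z))
    refine Set.mem_iUnion₂.mpr ⟨iz z', ?_, hVsub z' z hzV⟩
    exact Finset.mem_union_left _ (Finset.mem_image_of_mem iz hz't)
  · by_cases hb : ∃ z' ∈ t, σ b ∈ V z' ∧ b ∉ E z'
    · obtain ⟨z', hz't, hσV, hbE⟩ := hb
      refine Set.mem_iUnion₂.mpr ⟨iz z', ?_, hE z' b hbE hσV x⟩
      exact Finset.mem_union_left _ (Finset.mem_image_of_mem iz hz't)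
    · push_neg at hb
      obtain ⟨z', hz't, hσV⟩ := Set.mem_iUnion₂.mp (ht (Set.mem_univ (σ b)))
      have hbE : b ∈ t.biUnion E := Finset.mem_biUnion.mpr ⟨z', hz't, hb z' hz't hσV⟩
      obtain ⟨i, hi, hxi⟩ := Set.mem_iUnion₂.mp (htb b ⟨x, rfl⟩)
      refine Set.mem_iUnion₂.mpr ⟨i, ?_, hxi⟩
      exact Finset.mem_union_right _ (Finset.mem_biUnion.mpr ⟨b, hbE, hi⟩)

theorem tQ_compact [CompactSpace Z] [∀ a, CompactSpace (Xa a)] :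
    @CompactSpace (Quotient (gsetoid ι p)) (tQ ι p σ) := by
  refine @CompactSpace.mk _ (tQ ι p σ) ?_
  have h1 : @IsCompact _ (t0 (Z := Z) (Xa := Xa) σ) Set.univ :=
    @CompactSpace.isCompact_univ _ _ (t0_compact σ)
  have h2 := @IsCompact.image _ _ (t0 σ) (tQ ι p σ) _ _ h1 (continuous_mkQ ι p σ)
  have h3 : (Quotient.mk (gsetoid ι p)) '' Set.univ = Set.univ := by
    rw [Set.image_univ, Set.range_eq_univ]
    exact fun c => Quotient.exists_rep c
  rwa [h3] at h2

end Quot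

/-! ### The master condensation theorem -/

theorem master (Z : Type u) [TopologicalSpace Z] [CompactSpace Z] [T2Space Z]
    {A : Type u} (Xa : A → Type u) [∀ a, TopologicalSpace (Xa a)]
    [∀ a, CompactSpace (Xa a)] [∀ a, T2Space (Xa a)] (p : ∀ a, Xa a)
    (S : Set Z) (ι : ↥S ↪ A) (σ : A → Z) (hσ : ∀ s : ↥S, σ (ι s) = ↑s) :
    ∃ (Y : Type u) (_ : TopologicalSpace Y), CompactSpace Y ∧ T2Space Y ∧
      ∃ f : ↥((Sum.inl '' S : Set (Z ⊕ (Σ a, Xa a)))ᶜ) → Y,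
        Continuous f ∧ Function.Bijective f := by
  refine ⟨Quotient (gsetoid ι p), tQ ι p σ, tQ_compact ι p σ, t2_tQ ι p σ hσ,
    fun x => Quotient.mk _ x.val, ?_, ?_, ?_⟩
  · -- continuity: subtype val into sum topology, then id into t0, then mk
    have h1 : Continuous (fun x : ↥((Sum.inl '' S : Set (Z ⊕ (Σ a, Xa a)))ᶜ) => x.val) :=
      continuous_subtype_val
    have h2 : Continuous[instTopologicalSpaceSum, t0 (Z := Z) (Xa := Xa) σ]
        (id : (Z ⊕ (Σ a, Xa a)) → _) := continuous_id_of_le (t0_le σ)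
    exact @Continuous.comp _ _ _ _ (t0 σ) (tQ ι p σ) _ _ (continuous_mkQ ι p σ)
      (@Continuous.comp _ _ _ _ instTopologicalSpaceSum (t0 σ) _ _ h2 h1)
  · intro x y h
    have hr := Quotient.exact h
    rcases hr with heq | ⟨s, ⟨h1, h2⟩ | ⟨h1, h2⟩⟩
    · exact Subtype.ext heq
    · exact absurd ⟨↑s, s.2, h1.symm⟩ x.property
    · exact absurd ⟨↑s, s.2, h1.symm⟩ y.property
  · intro c
    obtain ⟨w, rfl⟩ := Quotient.exists_rep c
    rcases w with z | q
    · by_cases hz : z ∈ S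
      · refine ⟨⟨glue ι p ⟨z, hz⟩, ?_⟩, ?_⟩
        · rintro ⟨z', -, he⟩
          exact Sum.inl_ne_inr he
        · exact Quotient.sound (Or.inr ⟨⟨z, hz⟩, Or.inr ⟨rfl, rfl⟩⟩)
      · refine ⟨⟨Sum.inl z, ?_⟩, rfl⟩
        rintro ⟨z', hz', he⟩
        rw [Sum.inl.injEq] at he
        exact hz (he ▸ hz')
    · refine ⟨⟨Sum.inr q, ?_⟩, rfl⟩
      rintro ⟨z', -, he⟩
      exact Sum.inl_ne_inr he

/-! ### Transfer for empty `Z` -/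

section Transfer
variable {A : Type u} {Z : Type u} {Xa : A → Type u}

open scoped Classical in
/-- move the `a0`-blob into the base position. -/
noncomputable def rebaseSigma (a0 : A) : (Σ a, Xa a) → ((Xa a0) ⊕ (Σ b : {b : A // b ≠ a0}, Xa b.1))
  | ⟨a, xa⟩ => if h : a = a0 then Sum.inl (cast (congrArg Xa h) xa) else Sum.inr ⟨⟨a, h⟩, xa⟩

theorem rebaseSigma_pos (a0 : A) (xa : Xa a0) :
    rebaseSigma (Xa := Xa) a0 ⟨a0, xa⟩ = Sum.inl xa := dif_pos rfl

theorem rebaseSigma_neg (a0 : A) {a : A} (h : a ≠ a0) (xa : Xa a) :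
    rebaseSigma (Xa := Xa) a0 ⟨a, xa⟩ = Sum.inr ⟨⟨a, h⟩, xa⟩ := dif_neg h

theorem transfer [TopologicalSpace Z] [∀ a, TopologicalSpace (Xa a)]
    (hZ : IsEmpty Z) (a0 : A) :
    ∃ Φ : (Z ⊕ (Σ a, Xa a)) → ((Xa a0) ⊕ (Σ b : {b : A // b ≠ a0}, Xa b.1)),
      Continuous Φ ∧ Function.Bijective Φ := by
  refine ⟨Sum.elim (fun z => hZ.elim z) (rebaseSigma a0), ?_, ?_, ?_⟩
  · refine Continuous.sumElim ?_ ?_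
    · exact continuous_def.mpr fun s _ => by
        rw [Set.eq_empty_of_isEmpty (_ ⁻¹' s)]; exact isOpen_empty
    · refine continuous_sigma fun a => ?_
      by_cases h : a = a0
      · subst h
        simp only [rebaseSigma_pos]
        exact continuous_inl
      · simp only [rebaseSigma_neg a0 h]
        exact continuous_inr.comp continuous_sigmaMk
  · -- injective
    rintro (z | ⟨a, xa⟩) y h
    · exact hZ.elim z
    rcases y with z | ⟨b, xb⟩
    · exact hZ.elim z
    simp only [Sum.elim_inr] at h
    by_cases ha : a = a0 <;> by_cases hb : b = a0
    · subst ha; subst hb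
      rw [rebaseSigma_pos, rebaseSigma_pos, Sum.inl.injEq] at h
      rw [h]
    · subst ha
      rw [rebaseSigma_pos, rebaseSigma_neg _ hb] at h
      exact (Sum.inl_ne_inr h).elim
    · subst hb
      rw [rebaseSigma_pos, rebaseSigma_neg _ ha] at h
      exact (Sum.inr_ne_inl h).elim
    · rw [rebaseSigma_neg a0 ha, rebaseSigma_neg a0 hb, Sum.inr.injEq] at h
      obtain ⟨h1, h2⟩ := Sigma.mk.inj_iff.mp h
      obtain rfl : a = b := congrArg Subtype.val h1
      rw [Sum.inr.injEq, Sigma.mk.inj_iff]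
      exact ⟨rfl, h2⟩
  · -- surjective
    rintro (k | ⟨⟨b, hb⟩, w⟩)
    · exact ⟨Sum.inr ⟨a0, k⟩, by simp only [Sum.elim_inr, rebaseSigma_pos]⟩
    · exact ⟨Sum.inr ⟨b, w⟩, by simp only [Sum.elim_inr, rebaseSigma_neg a0 hb]⟩

end Transfer

end Stmt6Aux

/-- if `X = Z ⊕ (⊕_{α ∈ A} X_α)` with each `X_α` a nonempty compact Hausdorff
space, `#A = τ`, `Z` compact Hausdorff and `S ⊆ Z` with `#S ≤ τ`, then `X \ S` is
subcompact. -/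
theorem stmt_6 (τ : Cardinal.{u}) (hτ : ℵ₀ ≤ τ)
    (A : Type u) (hA : #A = τ)
    (Z : Type u) [TopologicalSpace Z] [CompactSpace Z] [T2Space Z]
    (Xa : A → Type u) [∀ a, TopologicalSpace (Xa a)] [∀ a, CompactSpace (Xa a)]
    [∀ a, T2Space (Xa a)] (hne : ∀ a, Nonempty (Xa a))
    (S : Set Z) (hS : #S ≤ τ) :
    Subcompact ↥((Sum.inl '' S : Set (Z ⊕ (Σ a, Xa a)))ᶜ) := by
  classical
  have hSA : #↥S ≤ #A := by rw [hA]; exact hS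
  obtain ⟨ι⟩ := (Cardinal.le_def _ _).mp hSA
  have p : ∀ a, Xa a := fun a => (hne a).some
  by_cases hZ : Nonempty Z
  · obtain ⟨z0⟩ := hZ
    have hσ : ∀ s : ↥S,
        (fun b => if h : ∃ s' : ↥S, ι s' = b then ↑h.choose else z0) (ι s) = ↑s := by
      intro s
      have h : ∃ s' : ↥S, ι s' = ι s := ⟨s, rfl⟩
      have he : (fun b => if h : ∃ s' : ↥S, ι s' = b then (↑h.choose : Z) else z0) (ι s)
          = ↑h.choose := dif_pos h
      rw [he]
      exact congrArg Subtype.val (ι.injective h.choose_spec)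
    exact Stmt6Aux.master Z Xa p S ι (fun b => if h : ∃ s' : ↥S, ι s' = b then ↑h.choose else z0) hσ
  · rw [not_nonempty_iff] at hZ
    by_cases hA' : Nonempty A
    · obtain ⟨a0⟩ := hA'
      obtain ⟨Φ, hΦc, hΦb⟩ := Stmt6Aux.transfer (Xa := Xa) hZ a0
      haveI : IsEmpty ↥(∅ : Set (Xa a0)) := ⟨fun s => s.2⟩
      obtain ⟨Y, tY, hc, ht, f, hfc, hfb⟩ :=
        Stmt6Aux.master (Xa a0) (fun b : {b : A // b ≠ a0} => Xa b.1)
          (fun b => p b.1) ∅ (Function.Embedding.ofIsEmpty)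
          (fun _ => p a0) (fun s => isEmptyElim s)
      have hmem : ∀ x : Z ⊕ (Σ a, Xa a),
          Φ x ∈ ((Sum.inl '' (∅ : Set (Xa a0)))ᶜ :
            Set ((Xa a0) ⊕ (Σ b : {b : A // b ≠ a0}, Xa b.1))) := by
        intro x
        rintro ⟨k, hk, -⟩
        exact Set.notMem_empty k hk
      refine ⟨Y, tY, hc, ht, fun x => f ⟨Φ x.val, hmem x.val⟩, ?_, ?_, ?_⟩
      · exact hfc.comp (Continuous.subtype_mk (hΦc.comp continuous_subtype_val) _)
      · intro x y h
        have h1 := hfb.1 h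
        rw [Subtype.mk.injEq] at h1
        exact Subtype.ext (hΦb.1 h1)
      · intro c
        obtain ⟨d, hd⟩ := hfb.2 c
        obtain ⟨x, hx⟩ := hΦb.2 d.val
        have hxm : x ∈ ((Sum.inl '' S)ᶜ : Set (Z ⊕ (Σ a, Xa a))) := by
          rintro ⟨z, -, -⟩
          exact hZ.elim z
        refine ⟨⟨x, hxm⟩, ?_⟩
        show f ⟨Φ x, hmem x⟩ = c
        have he : (⟨Φ x, hmem x⟩ : ↥((Sum.inl '' (∅ : Set (Xa a0)))ᶜ)) = d :=
          Subtype.ext hx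
        rw [he]
        exact hd
    · rw [not_nonempty_iff] at hA'
      exact Stmt6Aux.master Z Xa p S ι (fun a => isEmptyElim a)
        (fun s => hZ.elim ↑s)
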